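/- Let A and B be unital C*-algebras, G a group, u : G → A a group homomorphism into the unitary group of A such that the closed linear span of {u(g) : g ∈ G} is all of A, and β : G → Aut(B) a group homomorphism into the *-automorphisms of B. Let ψ : A → B be a continuous positive linear map (a ≥ 0 implies ψ(a) ≥ 0) which is G-equivariant in the sense that ψ(u(g) a u(g)*) = β(g)(ψ(a)) for all g ∈ G and a ∈ A. Then I_ψ := {a ∈ A : ψ(a* a) = 0} is a closed two-sided ideal of A. (This is the abstract content of the first assertion of Proposition 3.1, applied there with A = C*_π(Γ), the action by inner automorphisms g·a = π(g) a π(g)⁻¹, and ψ a boundary map into B = C(∂_F Γ).) -/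

import Mathlib

/-- Abstract content of Proposition 3.1: for a positive continuous linear map `ψ : A → B`
between unital C*-algebras that is equivariant for a unitary representation `u` of `G` on `A`
(with dense span) and an action `β` of `G` on `B` by ⋆-automorphisms, the set
`I_ψ = {a : A | ψ(a*a) = 0}` is a closed two-sided ideal of `A`. -/
theorem isClosed_twoSidedIdeal_of_equivariant_positive_map
    {G A B : Type*} [Group G]
    [NormedRing A] [StarRing A] [CStarRing A] [CompleteSpace A]
    [NormedAlgebra ℂ A] [StarModule ℂ A] [PartialOrder A] [StarOrderedRing A]
    [NormedRing B] [StarRing B] [CStarRing B] [CompleteSpace B]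
    [NormedAlgebra ℂ B] [StarModule ℂ B] [PartialOrder B] [StarOrderedRing B]
    (u : G →* unitary A)
    (hspan : (Submodule.span ℂ (Set.range fun g => (u g : A))).topologicalClosure = ⊤)
    (β : G →* (B ≃ₐ[ℂ] B))
    (hβstar : ∀ (g : G) (b : B), β g (star b) = star (β g b))
    (ψ : A →ₗ[ℂ] B) (hcont : Continuous ψ)
    (hpos : ∀ a : A, 0 ≤ a → 0 ≤ ψ a)
    (hequiv : ∀ (g : G) (a : A), ψ ((u g : A) * a * star (u g : A)) = β g (ψ a)) :
    IsClosed {a : A | ψ (star a * a) = 0} ∧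
      (0 : A) ∈ {a : A | ψ (star a * a) = 0} ∧
      (∀ a ∈ {a : A | ψ (star a * a) = 0}, ∀ b ∈ {a : A | ψ (star a * a) = 0},
        a + b ∈ {a : A | ψ (star a * a) = 0}) ∧
      (∀ a : A, ∀ b ∈ {a : A | ψ (star a * a) = 0}, a * b ∈ {a : A | ψ (star a * a) = 0}) ∧
      (∀ b ∈ {a : A | ψ (star a * a) = 0}, ∀ a : A, b * a ∈ {a : A | ψ (star a * a) = 0}) := by
  letI : CStarAlgebra A := ⟨⟩
  -- basic facts
  have hmono : ∀ x y : A, x ≤ y → ψ x ≤ ψ y := by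
    intro x y h
    have h0 : (0 : B) ≤ ψ (y - x) := hpos _ (sub_nonneg.mpr h)
    rw [map_sub] at h0
    exact sub_nonneg.mp h0
  have hmem : ∀ a : A, ψ (star a * a) ≤ 0 → ψ (star a * a) = 0 := fun a h =>
    le_antisymm h (hpos _ (star_mul_self_nonneg a))
  -- closed under addition
  have hadd : ∀ a b : A, ψ (star a * a) = 0 → ψ (star b * b) = 0 →
      ψ (star (a + b) * (a + b)) = 0 := by
    intro a b ha hb
    refine hmem _ ?_
    have key : star (a + b) * (a + b) ≤
        (star a * a + star b * b) + (star a * a + star b * b) := by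
      rw [← sub_nonneg]
      have h := star_mul_self_nonneg (a - b)
      have : star (a - b) * (a - b) =
          (star a * a + star b * b) + (star a * a + star b * b)
            - star (a + b) * (a + b) := by
        simp only [star_add, star_sub]
        noncomm_ring
      rwa [this] at h
    calc ψ (star (a + b) * (a + b))
        ≤ ψ ((star a * a + star b * b) + (star a * a + star b * b)) := hmono _ _ key
      _ = 0 := by rw [map_add, map_add, ha, hb]; simp
  -- closed under left multiplication
  have hlmul : ∀ (a b : A), ψ (star b * b) = 0 → ψ (star (a * b) * (a * b)) = 0 := by
    intro a b hb
    refine hmem _ ?_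
    have key : star (a * b) * (a * b) ≤ ‖star a * a‖ • (star b * b) := by
      have h := CStarAlgebra.star_left_conjugate_le_norm_smul (a := b) (b := star a * a)
        (IsSelfAdjoint.star_mul_self a)
      calc star (a * b) * (a * b) = star b * (star a * a) * b := by
            simp [star_mul, mul_assoc]
        _ ≤ ‖star a * a‖ • (star b * b) := h
    calc ψ (star (a * b) * (a * b)) ≤ ψ (‖star a * a‖ • (star b * b)) := hmono _ _ key
      _ = 0 := by
          rw [show (‖star a * a‖ • (star b * b)) = ((‖star a * a‖ : ℂ)) • (star b * b) by
                simp [Complex.coe_smul], map_smul, hb, smul_zero]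
  -- closed under right multiplication, via equivariance and density
  have hrmul : ∀ (b : A), ψ (star b * b) = 0 → ∀ a : A, ψ (star (b * a) * (b * a)) = 0 := by
    intro b hb a
    let S : Submodule ℂ A :=
      { carrier := {x : A | ψ (star (b * x) * (b * x)) = 0}
        zero_mem' := by simp
        add_mem' := by
          intro x y hx hy
          show ψ (star (b * (x + y)) * (b * (x + y))) = 0
          rw [mul_add]
          exact hadd _ _ hx hy
        smul_mem' := by
          intro c x hx
          have : b * (c • x) = c • (b * x) := by rw [mul_smul_comm]
          simp only [Set.mem_setOf_eq, this, star_smul, smul_mul_assoc, mul_smul_comm,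
            map_smul, smul_smul]
          rw [Set.mem_setOf_eq] at hx
          rw [hx, smul_zero] <;> simp [hx] }
    have hScl : IsClosed (S : Set A) := by
      have hc : Continuous fun x : A => ψ (star (b * x) * (b * x)) := by
        have h1 : Continuous fun x : A => b * x := continuous_const.mul continuous_id
        exact hcont.comp ((h1.star).mul h1)
      exact isClosed_singleton.preimage hc
    have hrange : ∀ g : G, (u g : A) ∈ S := by
      intro g
      show ψ (star (b * (u g : A)) * (b * (u g : A))) = 0
      have e1 : ((u g⁻¹ : unitary A) : A) = star (u g : A) := by
        rw [map_inv, ← Unitary.star_eq_inv]; rfl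
      have e2 : star (b * (u g : A)) * (b * (u g : A)) =
          ((u g⁻¹ : unitary A) : A) * (star b * b) * star ((u g⁻¹ : unitary A) : A) := by
        rw [e1, star_star, star_mul]
        noncomm_ring
      rw [e2, hequiv, hb, map_zero]
    have hle : Submodule.span ℂ (Set.range fun g => (u g : A)) ≤ S :=
      Submodule.span_le.mpr (by rintro _ ⟨g, rfl⟩; exact hrange g)
    have htop : (⊤ : Submodule ℂ A) ≤ S := by
      rw [← hspan]
      exact Submodule.topologicalClosure_minimal _ hle hScl
    exact htop (Submodule.mem_top) 
  refine ⟨?_, ?_, ?_, ?_, ?_⟩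
  · have hc : Continuous fun a : A => ψ (star a * a) :=
      hcont.comp (continuous_star.mul continuous_id)
    exact isClosed_singleton.preimage hc
  · simp
  · intro a ha c hc; exact hadd a c ha hc
  · intro a c hc; exact hlmul a c hc
  · intro c hc a; exact hrmul c hc a
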